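/- Let g be a positive (−1)-convex (harmonically convex in value) function on [a,b], and let f : [a,b] → (0,∞) be (g,−1)-convex dominated, with f(a) ≠ f(b), g(a) ≠ g(b), and f, g integrable on [a,b] (a < b). Then |f(a)f(b)·(ln f(a) − ln f(b))/(f(a) − f(b)) − (1/(b-a)) ∫_a^b f(x) dx| ≤ g(a)g(b)·(ln g(a) − ln g(b))/(g(a) − g(b)) − (1/(b-a)) ∫_a^b g(x) dx. -/

import Mathlib

open intervalIntegral MeasureTheory

lemma harm_pos_aux (p q l : ℝ) (hp : 0 < p) (hq : 0 < q) (hl : l ∈ Set.Icc (0:ℝ) 1) :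
    0 < l / p + (1 - l) / q := by
  rcases hl with ⟨h0, h1⟩
  rcases eq_or_lt_of_le h0 with h | h
  · have : 0 < (1 - l) / q := div_pos (by linarith) hq
    have : 0 ≤ l / p := div_nonneg h0 hp.le
    linarith
  · have h2 : 0 < l / p := div_pos h hp
    have h3 : 0 ≤ (1 - l) / q := div_nonneg (by linarith) hq.le
    linarith

lemma harm_intble (p q : ℝ) (hp : 0 < p) (hq : 0 < q) :
    IntervalIntegrable (fun l => (l / p + (1 - l) / q)⁻¹) volume 0 1 := by
  apply ContinuousOn.intervalIntegrable
  apply ContinuousOn.inv₀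
  · fun_prop
  · intro l hl
    rw [Set.uIcc_of_le (by norm_num : (0:ℝ) ≤ 1)] at hl
    exact (harm_pos_aux p q l hp hq hl).ne'

lemma harm_int (p q : ℝ) (hp : 0 < p) (hq : 0 < q) (hne : p ≠ q) :
    (∫ l in (0:ℝ)..1, (l / p + (1 - l) / q)⁻¹)
      = p * q * ((Real.log p - Real.log q) / (p - q)) := by
  have hc : (1/p - 1/q) ≠ 0 := by
    rw [sub_ne_zero]
    exact fun h => hne (by field_simp at h; linarith)
  have hrw : (fun l : ℝ => (l / p + (1 - l) / q)⁻¹)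
      = fun l : ℝ => ((1/p - 1/q) * l + 1/q)⁻¹ := by
    funext l; congr 1; ring
  rw [hrw, intervalIntegral.integral_comp_mul_add (fun x => x⁻¹) hc (1/q)]
  have e0 : (1/p - 1/q) * 0 + 1/q = 1/q := by ring
  have e1 : (1/p - 1/q) * 1 + 1/q = 1/p := by ring
  rw [e0, e1, integral_inv]
  · have hlog : Real.log (1/p / (1/q)) = Real.log q - Real.log p := by
      rw [one_div, one_div, Real.log_div (inv_ne_zero hp.ne') (inv_ne_zero hq.ne'),
        Real.log_inv, Real.log_inv]
      ring
    rw [hlog, smul_eq_mul]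
    have hpq : p - q ≠ 0 := sub_ne_zero.mpr hne
    have hqp : q - p ≠ 0 := fun h => hne (by linarith)
    have key : 1/p - 1/q = (q - p)/(p * q) := by field_simp
    rw [key, inv_div]
    field_simp
    ring
  · intro h
    rw [Set.mem_uIcc] at h
    rcases h with ⟨h1, _⟩ | ⟨h1, _⟩
    · exact absurd h1 (not_le.mpr (by positivity))
    · exact absurd h1 (not_le.mpr (by positivity))

theorem neg_one_dominated_gill (f g : ℝ → ℝ) (a b : ℝ) (hab : a < b)
    (hgpos : ∀ x ∈ Set.Icc a b, 0 < g x)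
    (hfpos : ∀ x ∈ Set.Icc a b, 0 < f x)
    (hg : ∀ x ∈ Set.Icc a b, ∀ y ∈ Set.Icc a b, ∀ l ∈ Set.Icc (0:ℝ) 1,
      g (l * x + (1 - l) * y) ≤ (l / g x + (1 - l) / g y)⁻¹)
    (hf : ∀ x ∈ Set.Icc a b, ∀ y ∈ Set.Icc a b, ∀ l ∈ Set.Icc (0:ℝ) 1,
      |(l / f x + (1 - l) / f y)⁻¹ - f (l * x + (1 - l) * y)| ≤
        (l / g x + (1 - l) / g y)⁻¹ - g (l * x + (1 - l) * y))
    (hfne : f a ≠ f b) (hgne : g a ≠ g b)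
    (hfint : IntervalIntegrable f MeasureTheory.volume a b)
    (hgint : IntervalIntegrable g MeasureTheory.volume a b) :
    |f a * f b * ((Real.log (f a) - Real.log (f b)) / (f a - f b))
        - (1 / (b - a)) * ∫ x in a..b, f x| ≤
      g a * g b * ((Real.log (g a) - Real.log (g b)) / (g a - g b))
        - (1 / (b - a)) * ∫ x in a..b, g x := by
  have haI : a ∈ Set.Icc a b := ⟨le_refl a, hab.le⟩
  have hbI : b ∈ Set.Icc a b := ⟨hab.le, le_refl b⟩
  have hfa := hfpos a haI; have hfb := hfpos b hbI
  have hga := hgpos a haI; have hgb := hgpos b hbI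
  have hne : a - b ≠ 0 := fun h => absurd hab (by intro _; linarith)
  have hne' : b - a ≠ 0 := fun h => absurd hab (by intro _; linarith)
  have hBint : IntervalIntegrable (fun l => f ((a-b)*l + b)) volume 0 1 := by
    have h2 := (hfint.symm.comp_add_right b).comp_mul_left (c := a - b)
    simpa [div_self hne] using h2
  have hDint : IntervalIntegrable (fun l => g ((a-b)*l + b)) volume 0 1 := by
    have h2 := (hgint.symm.comp_add_right b).comp_mul_left (c := a - b)
    simpa [div_self hne] using h2
  have hBval : (∫ l in (0:ℝ)..1, f ((a-b)*l + b)) = (1/(b-a)) * ∫ x in a..b, f x := by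
    rw [intervalIntegral.integral_comp_mul_add f hne b,
      show (a-b)*0+b = b by ring, show (a-b)*1+b = a by ring,
      intervalIntegral.integral_symm a b, smul_eq_mul]
    field_simp
    ring
  have hDval : (∫ l in (0:ℝ)..1, g ((a-b)*l + b)) = (1/(b-a)) * ∫ x in a..b, g x := by
    rw [intervalIntegral.integral_comp_mul_add g hne b,
      show (a-b)*0+b = b by ring, show (a-b)*1+b = a by ring,
      intervalIntegral.integral_symm a b, smul_eq_mul]
    field_simp
    ring
  have hAint := harm_intble (f a) (f b) hfa hfb
  have hCint := harm_intble (g a) (g b) hga hgb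
  rw [← harm_int (f a) (f b) hfa hfb hfne, ← harm_int (g a) (g b) hga hgb hgne,
    ← hBval, ← hDval, ← intervalIntegral.integral_sub hAint hBint,
    ← intervalIntegral.integral_sub hCint hDint]
  calc |∫ l in (0:ℝ)..1, ((l / f a + (1 - l) / f b)⁻¹ - f ((a-b)*l + b))|
      ≤ ∫ l in (0:ℝ)..1, |(l / f a + (1 - l) / f b)⁻¹ - f ((a-b)*l + b)| :=
        intervalIntegral.abs_integral_le_integral_abs (by norm_num)
    _ ≤ ∫ l in (0:ℝ)..1, ((l / g a + (1 - l) / g b)⁻¹ - g ((a-b)*l + b)) := by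
        apply intervalIntegral.integral_mono_on (by norm_num)
          ((hAint.sub hBint).abs) (hCint.sub hDint)
        intro l hl
        have := hf a haI b hbI l hl
        rwa [show l*a + (1-l)*b = (a-b)*l + b by ring] at this
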